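/- Let K be a commutative ring and let Λ^K_univ := Λ^K(ℝ) be the universal Novikov ring, obtained by taking Γ₀ = ℝ. If K is a field then Λ^K_univ is a field, and if K is a principal ideal domain then Λ^K_univ is a principal ideal domain. -/

import Mathlib

/-- The underlying set of the Novikov ring with coefficients in `K`, over an index
type `Γ` weighted by `w : Γ → ℝ`: functions `r : Γ → K` such that for every `c : ℝ`
only finitely many `γ` with `w γ < c` have `r γ ≠ 0`. -/
def NovikovSet (K : Type*) [Zero K] {Γ : Type*} (w : Γ → ℝ) : Set (Γ → K) :=
  {r | ∀ c : ℝ, {γ : Γ | r γ ≠ 0 ∧ w γ < c}.Finite}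

/-- The underlying set of the universal Novikov ring `Λ^K_univ = Λ^K(ℝ)`. -/
def UnivNovikovSet (K : Type*) [Zero K] : Set (ℝ → K) :=
  NovikovSet K (fun a : ℝ => a)

/-- A commutative ring structure on a set `S` of functions `Γ → K` is a Novikov ring
structure if addition is pointwise and multiplication is the convolution product
`(r·s)(γ) = Σ_{α+β=γ} r(α)s(β)`. -/
def IsNovikovRingStructure {K Γ : Type*} [CommRing K] [AddCommGroup Γ]
    (S : Set (Γ → K)) [CommRing ↥S] : Prop :=
  (∀ a b : ↥S, ∀ γ : Γ, ((a + b : ↥S) : Γ → K) γ = a.1 γ + b.1 γ) ∧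
  (∀ a b : ↥S, ∀ γ : Γ, ((a * b : ↥S) : Γ → K) γ = ∑ᶠ α : Γ, a.1 α * b.1 (γ - α))

namespace NovPID

open Set Function Pointwise

/-! ### Good sets of reals: sets with only finitely many elements below any bound -/

def Good (s : Set ℝ) : Prop := ∀ c : ℝ, (s ∩ Set.Iio c).Finite

theorem Good.mono {s t : Set ℝ} (hs : Good s) (h : t ⊆ s) : Good t :=
  fun c => (hs c).subset (Set.inter_subset_inter_left _ h)

theorem good_of_subset_singleton {s : Set ℝ} {x : ℝ} (h : s ⊆ {x}) : Good s :=
  fun _ => ((Set.finite_singleton x).subset h).inter_of_left _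

theorem mem_univNovikov_iff {K : Type*} [Zero K] {a : ℝ → K} :
    a ∈ UnivNovikovSet K ↔ Good (Function.support a) := by
  simp only [UnivNovikovSet, NovikovSet, Set.mem_setOf_eq, Good]
  constructor <;> intro h c <;> exact (h c).subset fun γ hγ => ⟨hγ.1, hγ.2⟩

theorem Good.exists_min {s : Set ℝ} (hs : Good s) (hne : s.Nonempty) :
    ∃ m ∈ s, ∀ x ∈ s, m ≤ x := by
  obtain ⟨x0, hx0⟩ := hne
  obtain ⟨m, hm, hmin⟩ := Set.exists_min_image _ id (hs (x0 + 1)) ⟨x0, hx0, lt_add_one x0⟩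
  refine ⟨m, hm.1, fun x hx => ?_⟩
  by_cases hlt : x < x0 + 1
  · exact hmin x ⟨hx, hlt⟩
  · exact le_trans (hmin x0 ⟨hx0, lt_add_one x0⟩) (by simp only [id] at *; linarith)

theorem Good.isWF {s : Set ℝ} (hs : Good s) : s.IsWF := by
  rw [Set.isWF_iff_no_descending_seq]
  intro f hf hmem
  have hinf : (s ∩ Set.Iio (f 0 + 1)).Infinite :=
    Set.infinite_of_injective_forall_mem (f := fun n : ℕ => f n) hf.injective
      (fun n => Set.mem_inter (hmem n)
        (lt_of_le_of_lt (hf.antitone (Nat.zero_le n)) (lt_add_one _)))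
  exact hinf (hs (f 0 + 1))

theorem Good.isPWO {s : Set ℝ} (hs : Good s) : s.IsPWO := hs.isWF.isPWO

theorem good_pairs {A B : Set ℝ} (hA : Good A) (hB : Good B) (γ : ℝ) :
    {p : ℝ × ℝ | p.1 ∈ A ∧ p.2 ∈ B ∧ p.1 + p.2 = γ}.Finite := by
  rcases A.eq_empty_or_nonempty with rfl | hAne
  · exact Set.finite_empty.subset (by rintro ⟨p, q⟩ ⟨hp, _, _⟩; exact hp)
  rcases B.eq_empty_or_nonempty with rfl | hBne
  · exact Set.finite_empty.subset (by rintro ⟨p, q⟩ ⟨_, hq, _⟩; exact hq)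
  obtain ⟨mA, hmA, hminA⟩ := hA.exists_min hAne
  obtain ⟨mB, hmB, hminB⟩ := hB.exists_min hBne
  apply ((hA (γ - mB + 1)).prod (hB (γ - mA + 1))).subset
  rintro ⟨p, q⟩ ⟨hp, hq, hpq⟩
  have h1 := hminB q hq
  have h2 := hminA p hp
  exact ⟨⟨hp, show p < γ - mB + 1 by linarith⟩, ⟨hq, show q < γ - mA + 1 by linarith⟩⟩

theorem Good.add {A B : Set ℝ} (hA : Good A) (hB : Good B) : Good (A + B) := by
  rcases A.eq_empty_or_nonempty with rfl | hAne
  · intro c; simp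
  rcases B.eq_empty_or_nonempty with rfl | hBne
  · intro c; simp
  obtain ⟨mA, hmA, hminA⟩ := hA.exists_min hAne
  obtain ⟨mB, hmB, hminB⟩ := hB.exists_min hBne
  intro c
  apply ((hA (c - mB)).add (hB (c - mA))).subset
  rintro x ⟨hxAB, hxc⟩
  rw [Set.mem_add] at hxAB
  obtain ⟨a, ha, b, hb, rfl⟩ := hxAB
  have h1 := hminA a ha
  have h2 := hminB b hb
  simp only [Set.mem_Iio] at hxc
  exact Set.add_mem_add ⟨ha, show a < c - mB by linarith⟩ ⟨hb, show b < c - mA by linarith⟩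

theorem good_closure {D : Set ℝ} {δ : ℝ} (hδ : 0 < δ) (hD : Good D)
    (hDδ : ∀ x ∈ D, δ ≤ x) : Good (AddSubmonoid.closure D : Set ℝ) := by
  set M := AddSubmonoid.closure D with hM
  have hnonneg : ∀ y ∈ M, (0:ℝ) ≤ y := by
    intro y hy
    induction hy using AddSubmonoid.closure_induction with
    | mem x hx => exact le_trans hδ.le (hDδ x hx)
    | zero => exact le_refl 0
    | add a b _ _ ha hb => exact add_nonneg ha hb
  have hdec : ∀ y ∈ M, y = 0 ∨ ∃ d ∈ D, ∃ m ∈ M, y = d + m := by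
    intro y hy
    induction hy using AddSubmonoid.closure_induction with
    | mem x hx => exact Or.inr ⟨x, hx, 0, zero_mem M, (add_zero x).symm⟩
    | zero => exact Or.inl rfl
    | add a b ha hb iha ihb =>
      rcases iha with rfl | ⟨d, hd, m, hm, rfl⟩
      · rw [zero_add]; exact ihb
      · exact Or.inr ⟨d, hd, m + b, add_mem hm hb, add_assoc d m b⟩
  have key : ∀ n : ℕ, {y | y ∈ M ∧ y < δ * n}.Finite := by
    intro n
    induction n with
    | zero =>
      apply Set.finite_empty.subset
      rintro y ⟨hy, hy0⟩
      have := hnonneg y hy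
      simp only [Nat.cast_zero, mul_zero] at hy0
      linarith
    | succ n ih =>
      simp only [Nat.cast_succ]
      have hsub : {y | y ∈ M ∧ y < δ * (n+1)} ⊆
          insert (0:ℝ) ((D ∩ Set.Iio (δ * (n+1))) + {y | y ∈ M ∧ y < δ * n}) := by
        rintro y ⟨hy, hylt⟩
        rcases hdec y hy with rfl | ⟨d, hd, m, hm, rfl⟩
        · exact Set.mem_insert 0 _
        · right
          have hd1 : δ ≤ d := hDδ d hd
          have hm0 : 0 ≤ m := hnonneg m hm
          refine Set.add_mem_add ⟨hd, ?_⟩ ⟨hm, ?_⟩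
          · show d < δ * (n+1); push_cast; nlinarith
          · push_cast at hylt ⊢; nlinarith
      exact ((((hD (δ * (n+1)))).add ih).insert 0).subset hsub
  intro c
  obtain ⟨n, hn⟩ := exists_nat_ge (c / δ)
  apply (key n).subset
  rintro y ⟨hy, hyc⟩
  refine ⟨hy, lt_of_lt_of_le hyc ?_⟩
  rw [div_le_iff₀ hδ] at hn
  calc c ≤ ↑n * δ := hn
  _ = δ * n := mul_comm _ _

/-! ### Inverse support lemma in Hahn series -/

theorem good_support_inv {F : Type*} [Field F] (x u : HahnSeries ℝ F) (hx : x ≠ 0)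
    (hgood : Good x.support) (hxu : x * u = 1) : Good u.support := by
  classical
  set ν := x.order with hν
  set D : Set ℝ := (fun t => t - ν) '' (x.support \ {ν}) with hD
  set M := AddSubmonoid.closure D with hM
  have hDgood : Good D := by
    intro c
    have hsub : D ∩ Set.Iio c ⊆ (fun t => t - ν) '' (x.support ∩ Set.Iio (c + ν)) := by
      rintro y ⟨⟨t, ⟨ht, _⟩, rfl⟩, hy⟩
      simp only [Set.mem_Iio] at hy
      exact ⟨t, ⟨ht, by simp only [Set.mem_Iio]; linarith⟩, rfl⟩
    exact (((hgood (c + ν)).image _)).subset hsub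
  have hkey : ∀ μ ∈ u.support, μ + ν ∈ M := by
    intro μ hμ
    refine Set.WellFoundedOn.induction (u.isPWO_support.isWF) hμ (P := fun z => z + ν ∈ M) ?_
    intro y hy IH
    by_cases hy0 : y + ν = 0
    · rw [hy0]; exact zero_mem M
    · have h1 : (x * u).coeff (ν + y) = 0 := by
        rw [hxu, HahnSeries.coeff_one, if_neg (by rw [add_comm]; exact hy0)]
      rw [HahnSeries.coeff_mul] at h1
      have hmem : ((ν, y) : ℝ × ℝ) ∈
          Finset.antidiagonal x.isPWO_support u.isPWO_support (ν + y) :=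
        Finset.mem_addAntidiagonal.mpr ⟨(mt HahnSeries.coeff_order_eq_zero.mp hx), hy, rfl⟩
      have hterm : x.coeff ν * u.coeff y ≠ 0 :=
        mul_ne_zero ((mt HahnSeries.coeff_order_eq_zero.mp hx)) hy
      have h2 : ∑ ij ∈ (Finset.antidiagonal x.isPWO_support u.isPWO_support
          (ν + y)).erase (ν, y), x.coeff ij.1 * u.coeff ij.2 ≠ 0 := by
        intro h0
        rw [← Finset.add_sum_erase _ _ hmem, h0, add_zero] at h1
        exact hterm h1
      obtain ⟨ij, hij, hij0⟩ := Finset.exists_ne_zero_of_sum_ne_zero h2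
      obtain ⟨hijne, hijmem⟩ := Finset.mem_erase.mp hij
      obtain ⟨hx1, hu2, hsum⟩ := Finset.mem_addAntidiagonal.mp hijmem
      have hij1le : ν ≤ ij.1 := HahnSeries.order_le_of_coeff_ne_zero hx1
      have hij1 : ν < ij.1 := by
        rcases lt_or_eq_of_le hij1le with h | h
        · exact h
        · exfalso; apply hijne
          have : ij.2 = y := by
            have := hsum; rw [← h] at this; linarith
          exact Prod.ext h.symm this
      have hij2lt : ij.2 < y := by linarith
      have hIH := IH ij.2 hu2 hij2lt
      have heq : y + ν = (ij.2 + ν) + (ij.1 - ν) := by linarith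
      rw [heq]
      exact add_mem hIH (AddSubmonoid.subset_closure
        ⟨ij.1, ⟨hx1, fun h => (lt_irrefl ν (by rw [Set.mem_singleton_iff] at h; rw [h] at hij1; exact hij1))⟩, rfl⟩)
  have hMgood : Good (M : Set ℝ) := by
    by_cases hempty : x.support \ {ν} = ∅
    · have hDe : D = ∅ := by rw [hD, hempty, Set.image_empty]
      rw [hM, hDe, AddSubmonoid.closure_empty]
      exact good_of_subset_singleton (by intro z hz; simpa using hz)
    · obtain ⟨δ, hδD, hδmin⟩ := hDgood.exists_min
        ((Set.nonempty_iff_ne_empty.mpr hempty).image _)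
      have hδpos : 0 < δ := by
        obtain ⟨t, ⟨ht, htν⟩, hteq⟩ := hδD
        have h1 : ν ≤ t := HahnSeries.order_le_of_coeff_ne_zero ht
        have h2 : t ≠ ν := by simpa using htν
        have h3 : ν < t := lt_of_le_of_ne h1 (Ne.symm h2)
        have h4 : δ = t - ν := by simpa using hteq.symm
        rw [h4]; linarith
      exact good_closure hδpos hDgood hδmin
  intro c
  apply ((hMgood (c + ν)).image (fun t => t - ν)).subset
  rintro μ ⟨hμ, hμc⟩
  simp only [Set.mem_Iio] at hμc
  exact ⟨μ + ν, ⟨hkey μ hμ, by simp only [Set.mem_Iio]; linarith⟩, by ring⟩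

/-! ### The embedding into Hahn series -/

section Embed

variable {K : Type*} [CommRing K] [CommRing ↥(UnivNovikovSet K)]
variable {F : Type*} [Field F]

theorem good_support (a : ↥(UnivNovikovSet K)) : Good (Function.support a.1) :=
  mem_univNovikov_iff.mp a.2

def toHahn (f : K →+* F) (a : ↥(UnivNovikovSet K)) : HahnSeries ℝ F where
  coeff := fun γ => f (a.1 γ)
  isPWO_support' := (((good_support a).mono
    (fun γ (h : f (a.1 γ) ≠ 0) => fun h0 : a.1 γ = 0 => h (by rw [h0, map_zero]))).isWF).isPWO

@[simp] theorem toHahn_coeff (f : K →+* F) (a : ↥(UnivNovikovSet K)) (γ : ℝ) :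
    (toHahn f a).coeff γ = f (a.1 γ) := rfl

theorem good_support_toHahn (f : K →+* F) (a : ↥(UnivNovikovSet K)) :
    Good (toHahn f a).support :=
  (good_support a).mono (fun γ (h : f (a.1 γ) ≠ 0) => fun h0 : a.1 γ = 0 =>
    h (by rw [h0, map_zero]))

variable {f : K →+* F}

theorem toHahn_injective (hf : Function.Injective f) :
    Function.Injective (toHahn f) := by
  intro a b h
  apply Subtype.ext
  funext γ
  exact hf (congrArg (fun z => HahnSeries.coeff z γ) h)

theorem val_zero (hS : IsNovikovRingStructure (UnivNovikovSet K)) (γ : ℝ) : ((0 : ↥(UnivNovikovSet K))).1 γ = 0 := by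
  have h := hS.1 0 0 γ
  rw [add_zero] at h
  exact left_eq_add.mp h

theorem toHahn_zero (hS : IsNovikovRingStructure (UnivNovikovSet K)) : toHahn f (0 : ↥(UnivNovikovSet K)) = 0 := by
  ext γ
  rw [toHahn_coeff, val_zero hS, map_zero, HahnSeries.coeff_zero]

theorem val_one (hS : IsNovikovRingStructure (UnivNovikovSet K)) (γ : ℝ) :
    ((1 : ↥(UnivNovikovSet K))).1 γ = if γ = 0 then 1 else 0 := by
  have hd : (fun γ : ℝ => if γ = 0 then (1:K) else 0) ∈ UnivNovikovSet K := by
    rw [mem_univNovikov_iff]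
    apply good_of_subset_singleton (x := 0)
    intro γ hγ
    simp only [Function.mem_support, ne_eq, ite_eq_right_iff, not_forall] at hγ
    simpa using hγ.1
  set d : ↥(UnivNovikovSet K) := ⟨_, hd⟩ with hdd
  have h := hS.2 d 1 γ
  rw [mul_one] at h
  rw [finsum_eq_single _ (0:ℝ)
    (fun x hx => by
      show (if x = 0 then (1:K) else 0) * _ = 0
      rw [if_neg hx, zero_mul])] at h
  have h0 : (d : ℝ → K) 0 = 1 := if_pos rfl
  rw [h0, one_mul, sub_zero] at h
  rw [← h]

theorem toHahn_one (hS : IsNovikovRingStructure (UnivNovikovSet K)) : toHahn f (1 : ↥(UnivNovikovSet K)) = 1 := by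
  ext γ
  rw [toHahn_coeff, val_one hS, HahnSeries.coeff_one]
  split <;> simp

theorem toHahn_add (hS : IsNovikovRingStructure (UnivNovikovSet K)) (a b : ↥(UnivNovikovSet K)) :
    toHahn f (a + b) = toHahn f a + toHahn f b := by
  ext γ
  rw [HahnSeries.coeff_add, toHahn_coeff, toHahn_coeff, toHahn_coeff, hS.1, map_add]

theorem conv_support_finite (a b : ↥(UnivNovikovSet K)) (γ : ℝ) :
    (Function.support fun α => a.1 α * b.1 (γ - α)).Finite := by
  apply ((good_pairs (good_support a) (good_support b) γ).image Prod.fst).subset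
  intro α hα
  have h1 : a.1 α ≠ 0 := fun h => hα (by show a.1 α * _ = 0; rw [h, zero_mul])
  have h2 : b.1 (γ - α) ≠ 0 := fun h => hα (by show a.1 α * _ = 0; rw [h, mul_zero])
  exact ⟨(α, γ - α), ⟨h1, h2, by ring⟩, rfl⟩

theorem toHahn_mul (hS : IsNovikovRingStructure (UnivNovikovSet K)) (hf : Function.Injective f) (a b : ↥(UnivNovikovSet K)) :
    toHahn f (a * b) = toHahn f a * toHahn f b := by
  classical
  ext γ
  rw [HahnSeries.coeff_mul, toHahn_coeff, hS.2 a b γ]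
  show f.toAddMonoidHom _ = _
  rw [AddMonoidHom.map_finsum f.toAddMonoidHom (conv_support_finite a b γ)]
  set s : Finset (ℝ × ℝ) :=
    Finset.antidiagonal (toHahn f a).isPWO_support (toHahn f b).isPWO_support γ with hs
  have hsub : (Function.support fun α => f.toAddMonoidHom (a.1 α * b.1 (γ - α))) ⊆
      ↑(s.image Prod.fst) := by
    intro α hα
    have h1 : a.1 α ≠ 0 := fun h => hα (by show f (a.1 α * _) = 0; rw [h, zero_mul, map_zero])
    have h2 : b.1 (γ - α) ≠ 0 := fun h => hα (by show f (_ * b.1 (γ - α)) = 0; rw [h, mul_zero, map_zero])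
    have hm : (α, γ - α) ∈ s := by
      rw [hs, Finset.mem_antidiagonal]
      refine ⟨?_, ?_, by ring⟩
      · show f (a.1 α) ≠ 0
        exact fun h => h1 (hf (by rw [h, map_zero]))
      · show f (b.1 (γ - α)) ≠ 0
        exact fun h => h2 (hf (by rw [h, map_zero]))
    simp only [Finset.coe_image, Set.mem_image, Finset.mem_coe]
    exact ⟨(α, γ - α), hm, rfl⟩
  rw [finsum_eq_sum_of_support_subset _ hsub]
  rw [Finset.sum_image (by
    rintro ⟨p1, p2⟩ hp ⟨q1, q2⟩ hq h
    rw [hs, Finset.mem_coe, Finset.mem_antidiagonal] at hp hq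
    simp only at h
    subst h
    have : p2 = q2 := by
      have h1 := hp.2.2; have h2 := hq.2.2; linarith
    rw [this])]
  apply Finset.sum_congr rfl
  rintro ⟨p1, p2⟩ hp
  rw [hs, Finset.mem_antidiagonal] at hp
  have : p2 = γ - p1 := by have := hp.2.2; linarith
  subst this
  show f (a.1 p1 * b.1 (γ - p1)) = _
  rw [map_mul]
  rfl

def toHahnHom (f : K →+* F) (hf : Function.Injective f)
    (hS : IsNovikovRingStructure (UnivNovikovSet K)) :
    ↥(UnivNovikovSet K) →+* HahnSeries ℝ F where
  toFun := toHahn f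
  map_one' := toHahn_one hS
  map_mul' := toHahn_mul hS hf
  map_zero' := toHahn_zero hS
  map_add' := toHahn_add hS

@[simp] theorem toHahnHom_apply (f : K →+* F) (hf : Function.Injective f)
    (hS : IsNovikovRingStructure (UnivNovikovSet K)) (a : ↥(UnivNovikovSet K)) :
    toHahnHom f hf hS a = toHahn f a := rfl

theorem exists_toHahn_eq (hf : Function.Injective f) (x : HahnSeries ℝ F)
    (hgood : Good x.support) (hcoeff : ∀ γ, x.coeff γ ∈ Set.range f) :
    ∃ a : ↥(UnivNovikovSet K), toHahn f a = x := by
  choose k hk using hcoeff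
  have hmem : k ∈ UnivNovikovSet K := by
    rw [mem_univNovikov_iff]
    apply hgood.mono
    intro γ (h : k γ ≠ 0)
    show x.coeff γ ≠ 0
    intro h0
    exact h (hf (by rw [hk, h0, map_zero]))
  exact ⟨⟨k, hmem⟩, by ext γ; exact hk γ⟩

/-- The "monomial" elements of the Novikov ring. -/
noncomputable def Tm (lam : ℝ) (k : K) : ↥(UnivNovikovSet K) :=
  ⟨fun γ => if γ = lam then k else 0, by
    rw [mem_univNovikov_iff]
    apply good_of_subset_singleton (x := lam)
    intro γ hγ
    simp only [Function.mem_support, ne_eq, ite_eq_right_iff, not_forall] at hγ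
    simpa using hγ.1⟩

theorem toHahn_Tm (f : K →+* F) (lam : ℝ) (k : K) :
    toHahn f (Tm lam k) = HahnSeries.single lam (f k) := by
  ext γ
  rw [toHahn_coeff, HahnSeries.coeff_single]
  show f (if γ = lam then k else 0) = _
  split <;> simp

theorem Tm_mul_val (hS : IsNovikovRingStructure (UnivNovikovSet K)) (lam : ℝ) (k : K) (s : ↥(UnivNovikovSet K)) (γ : ℝ) :
    ((Tm lam k * s)).1 γ = k * s.1 (γ - lam) := by
  rw [hS.2]
  rw [finsum_eq_single _ lam (fun x hx => by
    show (if x = lam then k else 0) * _ = 0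
    rw [if_neg hx, zero_mul])]
  show (if lam = lam then k else 0) * _ = _
  rw [if_pos rfl]

end Embed

/-! ### The main per-ideal principality lemma -/

theorem ideal_principal {K : Type*} [CommRing K] [CommRing ↥(UnivNovikovSet K)]
    (hS : IsNovikovRingStructure (UnivNovikovSet K)) {F : Type*} [Field F]
    (f : K →+* F) (hf : Function.Injective f) [IsPrincipalIdealRing K]
    (I : Ideal ↥(UnivNovikovSet K)) : I.IsPrincipal := by
  classical
  set Φ := toHahnHom f hf hS with hΦ
  have hΦc : ∀ (a : ↥(UnivNovikovSet K)) (γ : ℝ), (Φ a).coeff γ = f (a.1 γ) := fun a γ => rfl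
  have hΦinj : Function.Injective Φ := toHahn_injective hf
  -- the ideal of "normalized leading coefficients"
  set L : Ideal K :=
    { carrier := {k | ∃ s ∈ I, (∀ γ : ℝ, γ < 0 → s.1 γ = 0) ∧ s.1 0 = k}
      zero_mem' := ⟨0, I.zero_mem, fun γ _ => val_zero hS γ, val_zero hS 0⟩
      add_mem' := by
        rintro a b ⟨s, hsI, hslow, hs0⟩ ⟨t, htI, htlow, ht0⟩
        exact ⟨s + t, I.add_mem hsI htI,
          fun γ hγ => by rw [hS.1, hslow γ hγ, htlow γ hγ, add_zero],
          by rw [hS.1, hs0, ht0]⟩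
      smul_mem' := by
        rintro c a ⟨s, hsI, hslow, hs0⟩
        refine ⟨Tm 0 c * s, I.mul_mem_left _ hsI, fun γ hγ => ?_, ?_⟩
        · rw [Tm_mul_val hS, sub_zero, hslow γ hγ, mul_zero]
        · rw [Tm_mul_val hS, sub_zero, hs0, smul_eq_mul] } with hL
  obtain ⟨g, hg⟩ := Submodule.IsPrincipal.principal L
  have hfg_ne : g ≠ 0 → f g ≠ 0 := fun hg0 h => hg0 (hf (by rw [h, map_zero]))
  by_cases hg0 : g = 0
  · -- the ideal is zero
    have hIbot : I = ⊥ := by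
      rw [eq_bot_iff]
      intro s hsI
      rw [Ideal.mem_bot]
      by_contra hs0
      have hxne : toHahn f s ≠ 0 :=
        fun h => hs0 (toHahn_injective hf (h.trans (toHahn_zero hS).symm))
      set μ := (toHahn f s).order with hμ
      have h1 : s.1 μ ≠ 0 := fun h => (mt HahnSeries.coeff_order_eq_zero.mp hxne)
        (show f (s.1 μ) = 0 by rw [h, map_zero])
      have hlow : ∀ γ : ℝ, γ < μ → s.1 γ = 0 := fun γ hγ => hf (by
        rw [show f (s.1 γ) = (toHahn f s).coeff γ from rfl,
          HahnSeries.coeff_eq_zero_of_lt_order hγ, map_zero])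
      have hmem : s.1 μ ∈ L := ⟨Tm (-μ) 1 * s, I.mul_mem_left _ hsI,
        fun γ hγ => by
          rw [Tm_mul_val hS, one_mul, sub_neg_eq_add]
          exact hlow _ (by linarith),
        by rw [Tm_mul_val hS, one_mul, sub_neg_eq_add, zero_add]⟩
      rw [hg, hg0, Submodule.span_zero_singleton, Submodule.mem_bot] at hmem
      exact h1 hmem
    exact ⟨⟨0, by rw [hIbot]; exact (Submodule.span_zero_singleton _).symm⟩⟩
  · have hgL : g ∈ L := by rw [hg]; exact Submodule.mem_span_singleton_self g
    obtain ⟨r, hrI, hrlow, hr0⟩ := hgL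
    refine ⟨⟨r, le_antisymm ?_ ?_⟩⟩
    swap
    · rw [Submodule.span_le]; simpa using hrI
    intro s hsI
    by_cases hs0 : s = 0
    · rw [hs0]; exact Ideal.zero_mem _
    set x := Φ s with hx
    set y := Φ r with hy
    have hy0c : y.coeff 0 = f g := by rw [hΦc, hr0]
    have hyne : y ≠ 0 := fun h => hfg_ne hg0 (by rw [← hy0c, h, HahnSeries.coeff_zero])
    have hylow : ∀ β : ℝ, β < 0 → y.coeff β = 0 := fun β hβ => by
      rw [hΦc, hrlow β hβ, map_zero]
    have hyu : y * y⁻¹ = 1 := mul_inv_cancel₀ hyne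
    set u := y⁻¹ with hu
    set q := x * u with hq
    have hxyq : y * q = x := by rw [hq, mul_comm x u, ← mul_assoc, hyu, one_mul]
    have hgoodq : Good q.support :=
      (((good_support_toHahn f s).add (good_support_inv y u hyne
        (good_support_toHahn f r) hyu)).mono HahnSeries.support_mul_subset)
    have hrange : ∀ μ : ℝ, q.coeff μ ∈ Set.range f := by
      have main : ∀ μ ∈ q.support, q.coeff μ ∈ Set.range f := by
        intro μ0 hμ0
        refine Set.WellFoundedOn.induction (q.isPWO_support.isWF) hμ0 (P := fun z => q.coeff z ∈ Set.range f) ?_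
        intro μ hμs IH
        have IH' : ∀ β : ℝ, β < μ → q.coeff β ∈ Set.range f := by
          intro β hβ
          by_cases hβs : β ∈ q.support
          · exact IH β hβs hβ
          · exact ⟨0, by rw [map_zero]; exact (Function.notMem_support.mp hβs).symm⟩
        -- truncation of q below μ
        set xt : HahnSeries ℝ F :=
          ⟨fun β => if β < μ then q.coeff β else 0, (q.isPWO_support.mono (by
            intro β hβ
            simp only [Function.mem_support, ne_eq, ite_eq_right_iff, not_forall] at hβ
            exact hβ.2))⟩ with hxt
        have hxtc : ∀ β : ℝ, xt.coeff β = if β < μ then q.coeff β else 0 := fun β => rfl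
        obtain ⟨t, ht⟩ := exists_toHahn_eq hf xt
          (hgoodq.mono (by
            intro β hβ
            have hβ' : xt.coeff β ≠ 0 := hβ
            show q.coeff β ≠ 0
            rw [hxtc] at hβ'
            intro h0
            apply hβ'
            split <;> simp [h0]))
          (fun β => by
            rw [hxtc]
            by_cases h : β < μ
            · rw [if_pos h]; exact IH' β h
            · rw [if_neg h]; exact ⟨0, map_zero f⟩)
        set w := s - r * t with hw
        have hwI : w ∈ I := I.sub_mem hsI (I.mul_mem_right t hrI)
        have hΦw : Φ w = y * (q - xt) := by
          have : Φ w = Φ s - Φ r * Φ t := by rw [hw, map_sub, map_mul]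
          rw [this, show Φ t = xt from ht, ← hx, ← hy, ← hxyq]
          ring
        have hsub_coeff : ∀ β : ℝ, (q - xt).coeff β = if β < μ then 0 else q.coeff β := by
          intro β
          rw [HahnSeries.coeff_sub, hxtc]
          split <;> simp
        have hwlow : ∀ β : ℝ, β < μ → (Φ w).coeff β = 0 := by
          intro β hβ
          rw [hΦw, HahnSeries.coeff_mul]
          apply Finset.sum_eq_zero
          rintro ⟨i, j⟩ hij
          obtain ⟨hi, hj, hijsum⟩ := Finset.mem_addAntidiagonal.mp hij
          have hi0 : 0 ≤ i := le_of_not_gt (fun h => hi (hylow i h))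
          have hjμ : j < μ := by simp only at hijsum; linarith
          show y.coeff i * (q - xt).coeff j = 0
          rw [hsub_coeff j, if_pos hjμ, mul_zero]
        have hwμ : (Φ w).coeff μ = f g * q.coeff μ := by
          rw [hΦw, HahnSeries.coeff_mul]
          rw [Finset.sum_eq_single ((0:ℝ), μ)]
          · show y.coeff 0 * (q - xt).coeff μ = _
            rw [hy0c, hsub_coeff μ, if_neg (lt_irrefl μ)]
          · rintro ⟨i, j⟩ hij hne
            obtain ⟨hi, hj, hijsum⟩ := Finset.mem_addAntidiagonal.mp hij
            have hi0 : 0 ≤ i := le_of_not_gt (fun h => hi (hylow i h))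
            show y.coeff i * (q - xt).coeff j = 0
            by_cases hjμ : j < μ
            · rw [hsub_coeff j, if_pos hjμ, mul_zero]
            · exfalso
              apply hne
              simp only at hijsum
              have hj2 : μ ≤ j := not_lt.mp hjμ
              have hieq : i = 0 := by linarith
              have hjeq : j = μ := by linarith
              rw [hieq, hjeq]
          · intro hnmem
            exfalso
            apply hnmem
            rw [Finset.mem_addAntidiagonal]
            refine ⟨?_, ?_, zero_add μ⟩
            · show y.coeff 0 ≠ 0
              rw [hy0c]; exact hfg_ne hg0
            · show (q - xt).coeff μ ≠ 0
              rw [hsub_coeff μ, if_neg (lt_irrefl μ)]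
              exact hμs
        have hwlowK : ∀ β : ℝ, β < μ → w.1 β = 0 := fun β hβ => hf (by
          rw [show f (w.1 β) = (Φ w).coeff β from rfl, hwlow β hβ, map_zero])
        have hmemL : w.1 μ ∈ L := ⟨Tm (-μ) 1 * w, I.mul_mem_left _ hwI,
          fun γ hγ => by
            rw [Tm_mul_val hS, one_mul, sub_neg_eq_add]
            exact hwlowK _ (by linarith),
          by rw [Tm_mul_val hS, one_mul, sub_neg_eq_add, zero_add]⟩
        rw [hg, Submodule.mem_span_singleton] at hmemL
        obtain ⟨k, hk⟩ := hmemL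
        rw [smul_eq_mul] at hk
        refine ⟨k, ?_⟩
        have hcalc : f g * q.coeff μ = f g * f k := by
          rw [← hwμ, show (Φ w).coeff μ = f (w.1 μ) from rfl, ← hk, map_mul, mul_comm]
        exact (mul_left_cancel₀ (hfg_ne hg0) hcalc).symm
      intro μ
      by_cases hμ : μ ∈ q.support
      · exact main μ hμ
      · exact ⟨0, by rw [map_zero]; exact (Function.notMem_support.mp hμ).symm⟩
    obtain ⟨Q, hQ⟩ := exists_toHahn_eq hf q hgoodq hrange
    rw [Submodule.mem_span_singleton]
    refine ⟨Q, ?_⟩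
    rw [smul_eq_mul]
    refine hΦinj ?_
    rw [map_mul, show Φ Q = toHahn f Q from rfl, hQ, show Φ r = y from rfl, mul_comm, hxyq]

end NovPID

open NovPID in
/-- Let `K` be a commutative ring and `Λ^K_univ := Λ^K(ℝ)` the universal Novikov
ring. If `K` is a field then `Λ^K_univ` is a field, and if `K` is a principal ideal
domain then `Λ^K_univ` is a principal ideal domain. -/
theorem univNovikovRing_isField_and_isPID
    (K : Type*) [CommRing K]
    [CommRing ↥(UnivNovikovSet K)]
    (hS : IsNovikovRingStructure (UnivNovikovSet K)) :
    (IsField K → IsField ↥(UnivNovikovSet K)) ∧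
    ((IsPrincipalIdealRing K ∧ IsDomain K) →
      (IsPrincipalIdealRing ↥(UnivNovikovSet K) ∧ IsDomain ↥(UnivNovikovSet K))) := by
  constructor
  · intro hK
    letI : Field K := hK.toField
    have hf : Function.Injective (RingHom.id K) := fun a b h => h
    set Φ := toHahnHom (RingHom.id K) hf hS with hΦ
    have hΦinj : Function.Injective Φ := toHahn_injective hf
    refine ⟨⟨0, 1, fun h01 => ?_⟩, mul_comm, ?_⟩
    · have := congrArg Φ h01
      rw [map_zero, map_one] at this
      exact zero_ne_one this
    · intro a ha
      set x := Φ a with hx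
      have hxne : x ≠ 0 := fun h => ha (hΦinj (by rw [map_zero, ← hx]; exact h))
      have hxu : x * x⁻¹ = 1 := mul_inv_cancel₀ hxne
      have hgoodx : Good x.support := good_support_toHahn (RingHom.id K) a
      have hgoodu := good_support_inv x x⁻¹ hxne hgoodx hxu
      obtain ⟨b, hb⟩ := exists_toHahn_eq hf x⁻¹ hgoodu (fun γ => ⟨x⁻¹.coeff γ, rfl⟩)
      refine ⟨b, hΦinj ?_⟩
      rw [map_mul, map_one, show Φ b = toHahn (RingHom.id K) b from rfl, hb, hxu]
  · rintro ⟨hPIR, hDom⟩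
    have hf : Function.Injective (algebraMap K (FractionRing K)) :=
      IsFractionRing.injective K (FractionRing K)
    set Φ := toHahnHom (algebraMap K (FractionRing K)) hf hS with hΦ
    have hΦinj : Function.Injective Φ := toHahn_injective hf
    have hdom : IsDomain ↥(UnivNovikovSet K) := Function.Injective.isDomain Φ hΦinj
    exact ⟨⟨fun I => ideal_principal hS (algebraMap K (FractionRing K)) hf I⟩, hdom⟩
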